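/- Let f, g : ℝ² × ℝ → ℂ be 𝕃-periodic in their first variable, with the integral defining ((f,g))_d^{+−} absolutely convergent, let d > 0, and define W(X) := e^{−i(JK)·X} ((f,g))_d^{+−}(X). Then for every R_M = m₁ a_{1,M} + m₂ a_{2,M} ∈ 𝕃_M (m₁, m₂ ∈ ℤ) and every X ∈ ℝ²: W(X − R_M) = e^{i q₁·R_M} W(X) = ω^{m₁+m₂} W(X), where q₁ := JK and ω := e^{2πi/3}; in particular W is 3𝕃_M-periodic: W(X − 3R_M) = W(X) for all R_M ∈ 𝕃_M. -/

import Mathlib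

noncomputable section

open MeasureTheory Real Complex

abbrev Pt : Type := ℝ × ℝ

/-- Euclidean dot product on ℝ². -/
def dot (v w : Pt) : ℝ := v.1 * w.1 + v.2 * w.2

/-- The matrix J acting by J(x₁,x₂) = (x₂, −x₁). -/
def Jmat (v : Pt) : Pt := (v.2, -v.1)

/-- Rotation of ℝ² by angle θ. -/
def rotA (θ : ℝ) (v : Pt) : Pt :=
  (Real.cos θ * v.1 - Real.sin θ * v.2, Real.sin θ * v.1 + Real.cos θ * v.2)

/-- Lattice vector a₁ = a₀(1/2, −√3/2). -/
def av1 (a0 : ℝ) : Pt := (a0 / 2, -(Real.sqrt 3 * a0 / 2))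

/-- Lattice vector a₂ = a₀(1/2, √3/2). -/
def av2 (a0 : ℝ) : Pt := (a0 / 2, Real.sqrt 3 * a0 / 2)

/-- The graphene lattice 𝕃 = ℤa₁ + ℤa₂. -/
def lat (a0 : ℝ) : AddSubgroup Pt := AddSubgroup.closure {av1 a0, av2 a0}

/-- The moiré lattice 𝕃_M = J𝕃. -/
def latM (a0 : ℝ) : AddSubgroup Pt := AddSubgroup.closure {Jmat (av1 a0), Jmat (av2 a0)}

/-- Dual basis vector a₁*. -/
def as1 (a0 : ℝ) : Pt := (2 * π / a0, -(2 * π / (Real.sqrt 3 * a0)))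

/-- Dual basis vector a₂*. -/
def as2 (a0 : ℝ) : Pt := (2 * π / a0, 2 * π / (Real.sqrt 3 * a0))

/-- The Dirac point K = (a₁* + a₂*)/3. -/
def Kpt (a0 : ℝ) : Pt := (3 : ℝ)⁻¹ • (as1 a0 + as2 a0)

/-- A dual lattice vector G = m₁a₁* + m₂a₂*. -/
def dualVec (a0 : ℝ) (m : ℤ × ℤ) : Pt := (m.1 : ℝ) • as1 a0 + (m.2 : ℝ) • as2 a0

/-- 𝕃-periodicity in the first variable. -/
def LPeriodic (a0 : ℝ) (f : Pt → ℝ → ℂ) : Prop :=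
  ∀ R ∈ lat a0, ∀ (x : Pt) (z : ℝ), f (x + R) z = f x z

/-- K-quasiperiodicity in the first variable. -/
def KQuasiperiodic (a0 : ℝ) (Φ : Pt → ℝ → ℂ) : Prop :=
  ∀ R ∈ lat a0, ∀ (x : Pt) (z : ℝ),
    Φ (x + R) z = Complex.exp (Complex.I * (dot (Kpt a0) R : ℂ)) * Φ x z

/-- ω = e^{2πi/3}. -/
def ωc : ℂ := Complex.exp (2 * Real.pi * Complex.I / 3)

/-- The integrand of ((f,g))_d^{ηη'}(X). -/
def braFn (d η η' : ℝ) (f g : Pt → ℝ → ℂ) (X : Pt) (p : Pt × ℝ) : ℂ :=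
  (starRingEnd ℂ) (f (p.1 - (η / 2) • Jmat X) (p.2 - η * d / 2)) *
    g (p.1 - (η' / 2) • Jmat X) (p.2 - η' * d / 2)

/-- ((f,g))_d^{ηη'}(X), the interlayer pairing. -/
def bra (d : ℝ) (Ω : Set Pt) (η η' : ℝ) (f g : Pt → ℝ → ℂ) (X : Pt) : ℂ :=
  ∫ p in Ω ×ˢ (Set.univ : Set ℝ), braFn d η η' f g X p

lemma lat_mem (a0 : ℝ) (m₁ m₂ : ℤ) :
    (m₁ : ℝ) • av1 a0 + (m₂ : ℝ) • av2 a0 ∈ lat a0 := by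
  have h1 : av1 a0 ∈ lat a0 := AddSubgroup.subset_closure (by simp)
  have h2 : av2 a0 ∈ lat a0 := AddSubgroup.subset_closure (by simp)
  have e1 : (m₁ : ℝ) • av1 a0 = m₁ • av1 a0 := Int.cast_smul_eq_zsmul ℝ m₁ _
  have e2 : (m₂ : ℝ) • av2 a0 = m₂ • av2 a0 := Int.cast_smul_eq_zsmul ℝ m₂ _
  rw [e1, e2]
  exact AddSubgroup.add_mem _ (AddSubgroup.zsmul_mem _ h1 m₁) (AddSubgroup.zsmul_mem _ h2 m₂)

instance latCountable (a0 : ℝ) : Countable (lat a0) := by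
  have hc : (lat a0 : Set Pt).Countable := by
    refine Set.Countable.mono ?_ (Set.countable_range
      (fun p : ℤ × ℤ => p.1 • av1 a0 + p.2 • av2 a0))
    intro z hz
    rw [SetLike.mem_coe, lat, AddSubgroup.mem_closure_pair] at hz
    obtain ⟨m, n, h⟩ := hz
    exact ⟨(m, n), h⟩
  exact hc.to_subtype

lemma fund_translate {a0 : ℝ} {Ω : Set Pt}
    (hΩ : IsAddFundamentalDomain (lat a0) Ω volume) (w : Pt) :
    IsAddFundamentalDomain (lat a0) ((· + w) '' Ω) volume := by
  refine hΩ.image_of_equiv (Equiv.addRight w) ?_ (Equiv.refl _) ?_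
  · simpa using (measurePreserving_add_right (volume : Measure Pt) (-w)).quasiMeasurePreserving
  · intro g x
    show (↑g + x) + w = ↑g + (x + w)
    abel

lemma periodic_shift {a0 : ℝ} {Ω : Set Pt}
    (hΩ : IsAddFundamentalDomain (lat a0) Ω volume) (H : Pt → ℂ)
    (hH : ∀ R ∈ lat a0, ∀ x : Pt, H (x + R) = H x) (w : Pt) :
    ∫ x in Ω, H (x + w) = ∫ x in Ω, H x := by
  have h1 : ∫ x in (· + w) '' Ω, H x = ∫ x in Ω, H (x + w) :=
    (measurePreserving_add_right (volume : Measure Pt) w).setIntegral_image_emb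
      (MeasurableEquiv.addRight w).measurableEmbedding H Ω
  rw [← h1]
  exact (fund_translate hΩ w).setIntegral_eq hΩ (fun g x => by
    have := hH g g.2 x
    rw [add_comm] at this
    exact this)

lemma Jmat_sub (v w : Pt) : Jmat (v - w) = Jmat v - Jmat w := by
  simp only [Jmat, Prod.ext_iff, Prod.fst_sub, Prod.snd_sub]
  exact ⟨trivial, by ring⟩

lemma Jmat_Jmat (v : Pt) : Jmat (Jmat v) = -v := by
  simp [Jmat, Prod.ext_iff]

lemma bra_translate (a0 d : ℝ) (Ω : Set Pt)
    (hΩ : IsAddFundamentalDomain (lat a0) Ω volume)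
    (f g : Pt → ℝ → ℂ) (hf : LPeriodic a0 f) (hg : LPeriodic a0 g)
    (hint : ∀ X : Pt, IntegrableOn (braFn d 1 (-1) f g X) (Ω ×ˢ (Set.univ : Set ℝ)) volume)
    (R : Pt) (hR : R ∈ lat a0) (X : Pt) :
    bra d Ω 1 (-1) f g (X - Jmat R) = bra d Ω 1 (-1) f g X := by
  set w : Pt := -(((1:ℝ)/2) • R) with hw
  have hJ : Jmat (X - Jmat R) = Jmat X + R := by
    rw [Jmat_sub, Jmat_Jmat, sub_neg_eq_add]
  have key : ∀ (x : Pt) (z : ℝ),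
      braFn d 1 (-1) f g (X - Jmat R) (x, z) = braFn d 1 (-1) f g X (x + w, z) := by
    intro x z
    unfold braFn
    dsimp only
    rw [hJ]
    have harg1 : x - ((1:ℝ) / 2) • (Jmat X + R) = (x + w) - ((1:ℝ) / 2) • Jmat X := by
      rw [hw]; module
    have harg2 : x - ((-1:ℝ) / 2) • (Jmat X + R) = ((x + w) - ((-1:ℝ) / 2) • Jmat X) + R := by
      rw [hw]; module
    rw [harg1, harg2, hg R hR]
  have hH : ∀ R₀ ∈ lat a0, ∀ x : Pt,
      (∫ z in (Set.univ : Set ℝ), braFn d 1 (-1) f g X (x + R₀, z))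
        = ∫ z in (Set.univ : Set ℝ), braFn d 1 (-1) f g X (x, z) := by
    intro R₀ hR₀ x
    refine integral_congr_ae (Filter.Eventually.of_forall fun z => ?_)
    unfold braFn
    dsimp only
    have e1 : (x + R₀) - ((1:ℝ)/2) • Jmat X = (x - ((1:ℝ)/2) • Jmat X) + R₀ := by abel
    have e2 : (x + R₀) - ((-1:ℝ)/2) • Jmat X = (x - ((-1:ℝ)/2) • Jmat X) + R₀ := by abel
    rw [e1, e2, hf R₀ hR₀, hg R₀ hR₀]
  have h1 : IntegrableOn (braFn d 1 (-1) f g (X - Jmat R)) (Ω ×ˢ (Set.univ : Set ℝ))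
      ((volume : Measure Pt).prod (volume : Measure ℝ)) := hint (X - Jmat R)
  have h2 : IntegrableOn (braFn d 1 (-1) f g X) (Ω ×ˢ (Set.univ : Set ℝ))
      ((volume : Measure Pt).prod (volume : Measure ℝ)) := hint X
  unfold bra
  rw [show (volume : Measure (Pt × ℝ)) = (volume : Measure Pt).prod volume from rfl,
    MeasureTheory.setIntegral_prod _ h1,
    MeasureTheory.setIntegral_prod _ h2]
  calc ∫ x in Ω, ∫ z in Set.univ, braFn d 1 (-1) f g (X - Jmat R) (x, z)
      = ∫ x in Ω, ∫ z in Set.univ, braFn d 1 (-1) f g X (x + w, z) := by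
        refine integral_congr_ae (Filter.Eventually.of_forall fun x => ?_)
        exact integral_congr_ae (Filter.Eventually.of_forall fun z => key x z)
    _ = ∫ x in Ω, ∫ z in Set.univ, braFn d 1 (-1) f g X (x, z) :=
        periodic_shift hΩ (fun x => ∫ z in (Set.univ : Set ℝ), braFn d 1 (-1) f g X (x, z)) hH w

lemma Jmat_comb (c c' : ℝ) (v u : Pt) :
    c • Jmat v + c' • Jmat u = Jmat (c • v + c' • u) := by
  simp only [Jmat, Prod.ext_iff, Prod.fst_add, Prod.snd_add, Prod.smul_fst, Prod.smul_snd,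
    smul_eq_mul]
  exact ⟨trivial, by ring⟩

lemma dot_q (a0 : ℝ) (ha0 : a0 ≠ 0) (n₁ n₂ : ℤ) :
    dot (Jmat (Kpt a0)) ((n₁ : ℝ) • Jmat (av1 a0) + (n₂ : ℝ) • Jmat (av2 a0)) =
      ((n₁ : ℝ) + (n₂ : ℝ)) * (2 * π / 3) := by
  have h3 : Real.sqrt 3 ≠ 0 := by positivity
  simp only [dot, Kpt, as1, as2, av1, av2, Jmat, Prod.fst_add, Prod.snd_add, Prod.smul_fst,
    Prod.smul_snd, smul_eq_mul]
  field_simp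
  ring

lemma phase_eq (n₁ n₂ : ℤ) :
    Complex.exp (Complex.I * ((((n₁ : ℝ) + (n₂ : ℝ)) * (2 * π / 3) : ℝ) : ℂ)) =
      ωc ^ (n₁ + n₂) := by
  rw [ωc, ← Complex.exp_int_mul]
  congr 1
  push_cast
  ring

lemma omega_cube (n : ℤ) : ωc ^ (3 * n) = 1 := by
  rw [zpow_mul]
  have h : ωc ^ (3 : ℤ) = 1 := by
    rw [ωc, ← Complex.exp_int_mul,
      show ((3 : ℤ) : ℂ) * (2 * ↑Real.pi * Complex.I / 3) = 2 * ↑Real.pi * Complex.I by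
        push_cast; ring]
    exact Complex.exp_two_pi_mul_I
  rw [h, one_zpow]

/-- translational covariance of W(X) := e^{−i(JK)·X} ((f,g))_d^{+−}(X)
under the moiré lattice 𝕃_M = J𝕃, and 3𝕃_M-periodicity. -/
theorem stmt4 (a0 d : ℝ) (ha0 : 0 < a0) (hd : 0 < d) (Ω : Set Pt)
    (hΩ : IsAddFundamentalDomain (lat a0) Ω volume)
    (f g : Pt → ℝ → ℂ)
    (hf : LPeriodic a0 f) (hg : LPeriodic a0 g)
    (hint : ∀ X : Pt,
      IntegrableOn (braFn d 1 (-1) f g X) (Ω ×ˢ (Set.univ : Set ℝ)) volume)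
    (W : Pt → ℂ)
    (hW : ∀ X : Pt, W X =
      Complex.exp (-Complex.I * (dot (Jmat (Kpt a0)) X : ℂ)) * bra d Ω 1 (-1) f g X) :
    ∀ (m₁ m₂ : ℤ) (X : Pt),
      W (X - ((m₁ : ℝ) • Jmat (av1 a0) + (m₂ : ℝ) • Jmat (av2 a0))) =
          Complex.exp (Complex.I *
            (dot (Jmat (Kpt a0)) ((m₁ : ℝ) • Jmat (av1 a0) + (m₂ : ℝ) • Jmat (av2 a0)) : ℂ)) *
            W X ∧
      W (X - ((m₁ : ℝ) • Jmat (av1 a0) + (m₂ : ℝ) • Jmat (av2 a0))) =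
          ωc ^ (m₁ + m₂) * W X ∧
      W (X - (3 : ℝ) • ((m₁ : ℝ) • Jmat (av1 a0) + (m₂ : ℝ) • Jmat (av2 a0))) = W X := by
  have main : ∀ (n₁ n₂ : ℤ) (X : Pt),
      W (X - ((n₁ : ℝ) • Jmat (av1 a0) + (n₂ : ℝ) • Jmat (av2 a0))) =
        Complex.exp (Complex.I *
          (dot (Jmat (Kpt a0)) ((n₁ : ℝ) • Jmat (av1 a0) + (n₂ : ℝ) • Jmat (av2 a0)) : ℂ)) *
          W X := by
    intro n₁ n₂ X
    set RM : Pt := (n₁ : ℝ) • Jmat (av1 a0) + (n₂ : ℝ) • Jmat (av2 a0) with hRMdef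
    have hbra : bra d Ω 1 (-1) f g (X - RM) = bra d Ω 1 (-1) f g X := by
      rw [hRMdef, Jmat_comb]
      exact bra_translate a0 d Ω hΩ f g hf hg hint _ (lat_mem a0 n₁ n₂) X
    rw [hW, hW, hbra, ← mul_assoc, ← Complex.exp_add]
    congr 2
    have hdsub : dot (Jmat (Kpt a0)) (X - RM) =
        dot (Jmat (Kpt a0)) X - dot (Jmat (Kpt a0)) RM := by
      simp only [dot, Prod.fst_sub, Prod.snd_sub]; ring
    rw [hdsub]
    push_cast
    ring
  have momega : ∀ (n₁ n₂ : ℤ) (X : Pt),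
      W (X - ((n₁ : ℝ) • Jmat (av1 a0) + (n₂ : ℝ) • Jmat (av2 a0))) =
        ωc ^ (n₁ + n₂) * W X := by
    intro n₁ n₂ X
    rw [main n₁ n₂ X, dot_q a0 ha0.ne' n₁ n₂, phase_eq n₁ n₂]
  intro m₁ m₂ X
  refine ⟨main m₁ m₂ X, momega m₁ m₂ X, ?_⟩
  have h3 : (3 : ℝ) • ((m₁ : ℝ) • Jmat (av1 a0) + (m₂ : ℝ) • Jmat (av2 a0))
      = ((3 * m₁ : ℤ) : ℝ) • Jmat (av1 a0) + ((3 * m₂ : ℤ) : ℝ) • Jmat (av2 a0) := by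
    push_cast
    module
  rw [h3, momega (3 * m₁) (3 * m₂) X,
    show 3 * m₁ + 3 * m₂ = 3 * (m₁ + m₂) by ring, omega_cube, one_mul]
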